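/- Let q be an odd prime power, s an odd divisor of q+1, h an odd integer with 1 ≤ h ≤ s-1, l = (q²-1)/s, g a primitive element of F_{q²}, and δ = g^s (of order l). Suppose u_0,...,u_{h-1} ∈ F_q^* satisfy u_0+...+u_{h-1} = 1 and Σ_k g^{kμl} u_k = 0 for all (s-h)/2+1 ≤ μ ≤ (s+h)/2-1. Let e, v_0,...,v_{h-1} ∈ F_{q²} satisfy e^{q+1} = -l and v_k^{q+1} = u_k. Define a₁ ∈ F_{q²}^{1+lh} with coordinates (0, g^k δ^ν for 0 ≤ k ≤ h-1, 0 ≤ ν ≤ l-1) and v₁ with coordinates (e, v_k repeated l times for each k). Then Σ over all coordinates of a₁^{qi+j}·v₁^{q+1} equals 0 for all 0 ≤ i, j ≤ ((s+h)/2)·((q+1)/s) - 2. -/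

import Mathlib

lemma crux (Q S T H A M I J : ℤ) (hq : 3 ≤ Q) (hT : 2 ≤ T) (hst : Q + 1 = S * T)
    (hA : 2 * A = S + H) (hH : 1 ≤ H) (hHS : H + 2 ≤ S)
    (hI : 0 ≤ I) (hJ : 0 ≤ J) (hM : 1 ≤ M)
    (heq : Q * I + J = (Q - 1) * T * M)
    (hi : I + 2 ≤ A * T) (hj : J + 2 ≤ A * T) :
    S - A + 1 ≤ M ∧ M + 1 ≤ A := by
  have hS : 3 ≤ S := by linarith
  have hA2 : 2 ≤ A := by linarith
  have hAS : A + 1 ≤ S := by linarith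
  have hT0 : (0:ℤ) < T := by linarith
  have hAT : A * T + T ≤ Q + 1 := by
    nlinarith [mul_le_mul_of_nonneg_right hAS hT0.le]
  have hATQ : A * T ≤ Q - 1 := by linarith
  have hMA : M + 1 ≤ A := by
    have h1 : M * ((Q - 1) * T) < A * ((Q - 1) * T) := by
      nlinarith [mul_le_mul_of_nonneg_left (show I ≤ A * T - 2 by linarith)
        (show (0:ℤ) ≤ Q by linarith)]
    have := lt_of_mul_lt_mul_right h1 (by nlinarith : (0:ℤ) ≤ (Q - 1) * T)
    linarith
  refine ⟨?_, hMA⟩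
  have hMT : M * T ≤ Q - 3 := by
    nlinarith [mul_le_mul_of_nonneg_right (show M ≤ A - 1 by linarith) hT0.le]
  have hQC : Q * (M * T - I) = J + M * T := by linear_combination -heq
  have hMT2 : 2 ≤ M * T := by nlinarith
  have hC1 : 1 ≤ M * T - I := by nlinarith
  have hC2 : M * T - I ≤ 1 := by nlinarith
  have hc : M * T - I = 1 := le_antisymm hC2 hC1
  rw [hc, mul_one] at hQC
  have h2 : S * T < (A + M) * T := by nlinarith
  have := lt_of_mul_lt_mul_right h2 hT0.le
  linarith

theorem stmt_14 (q s h : ℕ) (hq : IsPrimePow q) (hqodd : Odd q)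
    (hsodd : Odd s) (hsdvd : s ∣ q + 1)
    (hh : 1 ≤ h) (hhodd : Odd h) (hhs : h ≤ s - 1)
    (F : Type*) [Field F] [Fintype F] (hF : Fintype.card F = q ^ 2)
    (g : F) (hg : orderOf g = q ^ 2 - 1)
    (u v : ℕ → F) (e : F)
    (hu : ∀ k < h, u k ≠ 0 ∧ (u k) ^ q = u k)
    (husum : ∑ k ∈ Finset.range h, u k = 1)
    (humu : ∀ μ : ℕ, (s - h) / 2 + 1 ≤ μ → μ ≤ (s + h) / 2 - 1 →
      ∑ k ∈ Finset.range h, g ^ (k * (μ * ((q ^ 2 - 1) / s))) * u k = 0)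
    (he : e ^ (q + 1) = - (((q ^ 2 - 1) / s : ℕ) : F))
    (hv : ∀ k < h, (v k) ^ (q + 1) = u k)
    (i j : ℕ) (hi : i ≤ (s + h) / 2 * ((q + 1) / s) - 2)
    (hj : j ≤ (s + h) / 2 * ((q + 1) / s) - 2) :
    (0 : F) ^ (q * i + j) * e ^ (q + 1)
      + ∑ k ∈ Finset.range h, ∑ ν ∈ Finset.range ((q ^ 2 - 1) / s),
          (g ^ k * (g ^ s) ^ ν) ^ (q * i + j) * (v k) ^ (q + 1) = 0 := by
  obtain ⟨q2, hq2⟩ := hqodd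
  have hq2le := hq.two_le
  have hq3 : 3 ≤ q := by omega
  obtain ⟨s2, hs2⟩ := hsodd
  obtain ⟨h2, hh2⟩ := hhodd
  have hs3 : 3 ≤ s := by omega
  have hhs2 : h + 2 ≤ s := by omega
  obtain ⟨t, htq⟩ := hsdvd
  have hs0 : 0 < s := by omega
  have htdef : (q + 1) / s = t := by rw [htq, Nat.mul_div_cancel_left _ hs0]
  have ht0 : t ≠ 0 := by rintro rfl; simp at htq
  have ht2 : 2 ≤ t := by
    rcases Nat.even_or_odd t with he' | ho'
    · obtain ⟨t2, ht2'⟩ := he'; omega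
    · exfalso
      have hos : Odd s := ⟨s2, hs2⟩
      have : Odd (q + 1) := htq ▸ hos.mul ho'
      obtain ⟨w, hw⟩ := this; omega
  have hfac : q ^ 2 - 1 = (q + 1) * (q - 1) := by
    have h1 : 1 ≤ q ^ 2 := Nat.one_le_pow _ _ (by omega)
    zify [h1, show 1 ≤ q by omega]
    ring
  have hldef : (q ^ 2 - 1) / s = (q - 1) * t := by
    rw [hfac, htq, show s * t * (q - 1) = s * (t * (q - 1)) by ring,
      Nat.mul_div_cancel_left _ hs0, mul_comm]
  have hsdvd2 : s ∣ q ^ 2 - 1 := by rw [hfac]; exact Dvd.dvd.mul_right ⟨t, htq⟩ _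
  have hls : (q ^ 2 - 1) / s * s = q ^ 2 - 1 := Nat.div_mul_cancel hsdvd2
  set L := (q ^ 2 - 1) / s with hLdef
  have horder : ∀ n : ℕ, g ^ n = 1 ↔ q ^ 2 - 1 ∣ n := fun n => by
    rw [← hg]
    exact orderOf_dvd_iff_pow_eq_one.symm
  by_cases hm0 : q * i + j = 0
  · rw [hm0]
    simp only [pow_zero, one_mul]
    rw [he]
    have hc : ∀ k ∈ Finset.range h, ∑ _ν ∈ Finset.range L, v k ^ (q + 1)
        = ((L : ℕ) : F) * u k := by
      intro k hk
      rw [Finset.sum_const, Finset.card_range, nsmul_eq_mul, hv k (Finset.mem_range.mp hk)]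
    rw [Finset.sum_congr rfl hc, ← Finset.mul_sum, husum, mul_one, neg_add_cancel]
  · rw [zero_pow hm0, zero_mul, zero_add]
    have hstep : ∀ k ∈ Finset.range h,
        ∑ ν ∈ Finset.range L,
            (g ^ k * (g ^ s) ^ ν) ^ (q * i + j) * v k ^ (q + 1)
          = g ^ (k * (q * i + j)) * u k
            * ∑ ν ∈ Finset.range L, (g ^ (s * (q * i + j))) ^ ν := by
      intro k hk
      rw [Finset.mul_sum]
      refine Finset.sum_congr rfl fun ν _ => ?_
      rw [hv k (Finset.mem_range.mp hk), ← pow_mul g s ν, ← pow_add,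
        ← pow_mul g (k + s * ν) (q * i + j), ← pow_mul g (s * (q * i + j)) ν,
        show (k + s * ν) * (q * i + j) = k * (q * i + j) + s * (q * i + j) * ν by ring,
        pow_add]
      ring
    rw [Finset.sum_congr rfl hstep]
    by_cases hldvd : L ∣ q * i + j
    · obtain ⟨μ, hμ⟩ := hldvd
      have hx1 : g ^ (s * (q * i + j)) = 1 := by
        rw [horder, hμ]
        exact ⟨μ, by rw [← hls]; ring⟩
      have hG : ∑ ν ∈ Finset.range L, (g ^ (s * (q * i + j))) ^ ν
          = ((L : ℕ) : F) := by
        rw [hx1]; simp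
      have hμ1 : 1 ≤ μ :=
        Nat.pos_of_ne_zero fun h' => hm0 (by rw [hμ, h', mul_zero])
      have hNat : q * i + j = (q - 1) * t * μ := by rw [hμ, hldef]
      have hA : 2 * ((s + h) / 2) = s + h := by omega
      have hAt : 2 * 2 ≤ (s + h) / 2 * t :=
        Nat.mul_le_mul (show 2 ≤ (s + h) / 2 by omega) ht2
      rw [htdef] at hi hj
      have hiN : i + 2 ≤ (s + h) / 2 * t := by omega
      have hjN : j + 2 ≤ (s + h) / 2 * t := by omega
      have heqZ : (q : ℤ) * i + j = ((q : ℤ) - 1) * t * μ := by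
        zify [show 1 ≤ q by omega] at hNat
        exact_mod_cast hNat
      obtain ⟨c1, c2⟩ := crux (q : ℤ) s t h ((s + h) / 2 : ℕ) μ i j
        (by exact_mod_cast hq3) (by exact_mod_cast ht2) (by exact_mod_cast htq)
        (by exact_mod_cast hA) (by exact_mod_cast hh) (by exact_mod_cast hhs2)
        (Int.natCast_nonneg i) (Int.natCast_nonneg j) (by exact_mod_cast hμ1)
        heqZ (by exact_mod_cast hiN) (by exact_mod_cast hjN)
      have c1' : s + 1 ≤ μ + (s + h) / 2 := by
        have hz : (s : ℤ) + 1 ≤ (μ : ℤ) + (((s + h) / 2 : ℕ) : ℤ) := by linarith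
        exact_mod_cast hz
      have c2' : μ + 1 ≤ (s + h) / 2 := by exact_mod_cast c2
      have hb1 : (s - h) / 2 + 1 ≤ μ := by omega
      have hb2 : μ ≤ (s + h) / 2 - 1 := by omega
      have hfin : ∑ k ∈ Finset.range h,
          g ^ (k * (q * i + j)) * u k
            * ∑ ν ∈ Finset.range L, (g ^ (s * (q * i + j))) ^ ν
          = (∑ k ∈ Finset.range h, g ^ (k * (μ * L)) * u k) * ((L : ℕ) : F) := by
        rw [Finset.sum_mul]
        refine Finset.sum_congr rfl fun k _ => ?_
        rw [hG, hμ, show k * (L * μ) = k * (μ * L) by ring]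
      rw [hfin, humu μ hb1 hb2, zero_mul]
    · have hx1 : g ^ (s * (q * i + j)) ≠ 1 := by
        intro hone
        have hdvd := (horder _).mp hone
        apply hldvd
        refine (Nat.mul_dvd_mul_iff_right hs0).mp ?_
        rw [hls]
        rwa [mul_comm] at hdvd
      have hGl : (g ^ (s * (q * i + j))) ^ L = 1 := by
        rw [← pow_mul, horder]
        exact ⟨q * i + j, by rw [← hls]; ring⟩
      have hG0 : ∑ ν ∈ Finset.range L, (g ^ (s * (q * i + j))) ^ ν = 0 := by
        have hgm := geom_sum_mul (g ^ (s * (q * i + j))) L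
        rw [hGl, sub_self] at hgm
        rcases mul_eq_zero.mp hgm with h' | h'
        · exact h'
        · exact absurd (sub_eq_zero.mp h') hx1
      exact Finset.sum_eq_zero fun k _ => by rw [hG0, mul_zero]
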